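/- Let (ξ₁,…,ξ_k) be a uniformly random sample without replacement from {1,…,n} (k ≤ n), set ζ_i = ξ_i/n, and for a function f : [0,1] → ℝ define the martingale differences Z_j = E_j[S] − E_{j−1}[S] where S = ∑_{i=1}^k f(ζ_i) and E_j is conditional expectation given ξ₁,…,ξ_j. Then Z_j = ((n−k)/(n−j)) · (f(ζ_j) − E_{j−1} f(ζ_j)). -/

import Mathlib

open Finset in
/-- Conditional expectation of `F` given the first `j` coordinates of a uniformly random
sample without replacement (an injective tuple) from `{1,…,n}`. -/
noncomputable def condExpSWOR (n k : ℕ) (j : ℕ) (F : (Fin k ↪ Fin n) → ℝ)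
    (σ : Fin k ↪ Fin n) : ℝ :=
  (∑ τ ∈ univ.filter (fun τ : Fin k ↪ Fin n => ∀ i : Fin k, (i : ℕ) < j → τ i = σ i), F τ) /
  ((univ.filter (fun τ : Fin k ↪ Fin n => ∀ i : Fin k, (i : ℕ) < j → τ i = σ i)).card : ℝ)

namespace SWOR

open Finset

variable {n k : ℕ}

/-- Samples agreeing with `σ` on the first `j` coordinates. -/
noncomputable def Aj (n k j : ℕ) (σ : Fin k ↪ Fin n) : Finset (Fin k ↪ Fin n) :=
  univ.filter (fun τ => ∀ i : Fin k, (i : ℕ) < j → τ i = σ i)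

/-- Values not taken by the first `j` coordinates of `σ`. -/
noncomputable def Sj (n k j : ℕ) (σ : Fin k ↪ Fin n) : Finset (Fin n) :=
  univ.filter (fun a => ∀ l : Fin k, (l : ℕ) < j → σ l ≠ a)

lemma condExpSWOR_eq (j : ℕ) (F : (Fin k ↪ Fin n) → ℝ) (σ : Fin k ↪ Fin n) :
    condExpSWOR n k j F σ = (∑ τ ∈ Aj n k j σ, F τ) / ((Aj n k j σ).card : ℝ) := rfl

lemma card_Aj_pos (j : ℕ) (σ : Fin k ↪ Fin n) : 0 < (Aj n k j σ).card :=
  Finset.card_pos.2 ⟨σ, by simp [Aj]⟩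

lemma maps_to_Sj {j : ℕ} (σ : Fin k ↪ Fin n) {i : Fin k} (hi : j ≤ (i : ℕ)) :
    ∀ τ ∈ Aj n k j σ, τ i ∈ Sj n k j σ := by
  intro τ hτ
  simp only [Aj, Sj, mem_filter, mem_univ, true_and] at *
  intro l hl h
  have h1 : τ l = τ i := by rw [hτ l hl, h]
  have := τ.injective h1
  omega

lemma card_filter_lt {j : ℕ} (hjk : j ≤ k) :
    ((univ : Finset (Fin k)).filter (fun l : Fin k => (l : ℕ) < j)).card = j := by
  have h : (univ : Finset (Fin k)).filter (fun l : Fin k => (l : ℕ) < j)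
      = Finset.map (Fin.castLEEmb hjk) univ := by
    ext l
    simp only [mem_filter, mem_univ, true_and, Finset.mem_map]
    constructor
    · intro hl
      exact ⟨⟨l, hl⟩, by simp [Fin.castLEEmb, Fin.ext_iff]⟩
    · rintro ⟨m, rfl⟩
      simpa [Fin.castLEEmb] using m.isLt
  rw [h, Finset.card_map, Finset.card_univ, Fintype.card_fin]

lemma card_Sj {j : ℕ} (hjk : j ≤ k) (σ : Fin k ↪ Fin n) : (Sj n k j σ).card = n - j := by
  have himg : Sj n k j σ = ((univ.filter (fun l : Fin k => (l : ℕ) < j)).image σ)ᶜ := by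
    ext a
    simp [Sj]
  rw [himg, Finset.card_compl, Finset.card_image_of_injective _ σ.injective,
    card_filter_lt hjk, Fintype.card_fin]

lemma swap_mem {j : ℕ} (σ : Fin k ↪ Fin n) (i : Fin k) {a b : Fin n}
    (ha : a ∈ Sj n k j σ) (hb : b ∈ Sj n k j σ) {τ : Fin k ↪ Fin n}
    (hτ : τ ∈ (Aj n k j σ).filter (fun τ => τ i = a)) :
    τ.trans (Equiv.swap a b).toEmbedding ∈ (Aj n k j σ).filter (fun τ => τ i = b) := by
  simp only [Aj, Sj, mem_filter, mem_univ, true_and] at *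
  obtain ⟨h1, h2⟩ := hτ
  refine ⟨fun l hl => ?_, ?_⟩
  · simp only [Function.Embedding.trans_apply, Equiv.coe_toEmbedding, h1 l hl]
    exact Equiv.swap_apply_of_ne_of_ne (fun h => ha l hl h) (fun h => hb l hl h)
  · simp [h2]

lemma trans_swap_swap {a b : Fin n} (τ : Fin k ↪ Fin n) :
    (τ.trans (Equiv.swap a b).toEmbedding).trans (Equiv.swap a b).toEmbedding = τ := by
  ext x
  simp [Equiv.swap_apply_self]

lemma fiber_card_eq {j : ℕ} (σ : Fin k ↪ Fin n) (i : Fin k) {a b : Fin n}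
    (ha : a ∈ Sj n k j σ) (hb : b ∈ Sj n k j σ) :
    ((Aj n k j σ).filter (fun τ => τ i = a)).card
      = ((Aj n k j σ).filter (fun τ => τ i = b)).card := by
  refine Finset.card_bij' (fun τ _ => τ.trans (Equiv.swap a b).toEmbedding)
    (fun τ _ => τ.trans (Equiv.swap a b).toEmbedding)
    (fun τ hτ => swap_mem σ i ha hb hτ)
    (fun τ hτ => by simpa [Equiv.swap_comm] using swap_mem σ i hb ha hτ)
    (fun τ _ => trans_swap_swap τ) (fun τ _ => trans_swap_swap τ)

lemma key {j : ℕ} (σ : Fin k ↪ Fin n) (g : Fin n → ℝ) (i : Fin k) (hi : j ≤ (i : ℕ)) :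
    ((Sj n k j σ).card : ℝ) * ∑ τ ∈ Aj n k j σ, g (τ i)
      = ((Aj n k j σ).card : ℝ) * ∑ a ∈ Sj n k j σ, g a := by
  classical
  have ha0 : σ i ∈ Sj n k j σ := maps_to_Sj σ hi σ (by simp [Aj])
  set N := ((Aj n k j σ).filter (fun τ => τ i = σ i)).card with hN
  have hfib : ∀ a ∈ Sj n k j σ, ((Aj n k j σ).filter (fun τ => τ i = a)).card = N :=
    fun a ha => fiber_card_eq σ i ha ha0
  have h1 : ∑ τ ∈ Aj n k j σ, g (τ i)
      = ∑ a ∈ Sj n k j σ, ∑ τ ∈ (Aj n k j σ).filter (fun τ => τ i = a), g (τ i) :=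
    (Finset.sum_fiberwise_of_maps_to (maps_to_Sj σ hi) _).symm
  have h2 : ∀ a ∈ Sj n k j σ,
      ∑ τ ∈ (Aj n k j σ).filter (fun τ => τ i = a), g (τ i) = (N : ℝ) * g a := by
    intro a ha
    rw [Finset.sum_congr rfl (fun τ hτ => by rw [(mem_filter.1 hτ).2]),
      Finset.sum_const, hfib a ha, nsmul_eq_mul]
  have h3 : (Aj n k j σ).card = (Sj n k j σ).card * N := by
    rw [Finset.card_eq_sum_card_fiberwise (maps_to_Sj σ hi),
      Finset.sum_congr rfl hfib, Finset.sum_const, smul_eq_mul]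
  rw [h1, Finset.sum_congr rfl h2, ← Finset.mul_sum, h3]
  push_cast
  ring

lemma sum_ge {j : ℕ} (hjk : j ≤ k) (hjn : j < n) (σ : Fin k ↪ Fin n) (g : Fin n → ℝ)
    (i : Fin k) (hi : j ≤ (i : ℕ)) :
    ∑ τ ∈ Aj n k j σ, g (τ i)
      = ((Aj n k j σ).card : ℝ) * (∑ a ∈ Sj n k j σ, g a) / ((n : ℝ) - j) := by
  have hd : ((Sj n k j σ).card : ℝ) = (n : ℝ) - j := by
    rw [card_Sj hjk]
    push_cast [Nat.cast_sub hjn.le]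
    ring
  have hd0 : ((n : ℝ) - j) ≠ 0 := by
    have : (j : ℝ) < n := by exact_mod_cast hjn
    linarith
  have := key σ g i hi
  rw [hd] at this
  field_simp
  linarith [this]

lemma condExp_sum {j : ℕ} (hjk : j ≤ k) (hjn : j < n) (σ : Fin k ↪ Fin n) (g : Fin n → ℝ) :
    condExpSWOR n k j (fun τ => ∑ i : Fin k, g (τ i)) σ =
      (∑ i ∈ univ.filter (fun i : Fin k => (i : ℕ) < j), g (σ i)) +
      (((k : ℝ) - j) / ((n : ℝ) - j)) * ∑ a ∈ Sj n k j σ, g a := by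
  have hd0 : ((n : ℝ) - j) ≠ 0 := by
    have : (j : ℝ) < n := by exact_mod_cast hjn
    linarith
  have hc0 : ((Aj n k j σ).card : ℝ) ≠ 0 := by
    exact_mod_cast (card_Aj_pos j σ).ne'
  rw [condExpSWOR_eq]
  have hswap : ∑ τ ∈ Aj n k j σ, ∑ i : Fin k, g (τ i)
      = ∑ i : Fin k, ∑ τ ∈ Aj n k j σ, g (τ i) := Finset.sum_comm
  rw [hswap, ← Finset.sum_filter_add_sum_filter_not univ (fun i : Fin k => (i : ℕ) < j)]
  have hlt : ∀ i ∈ univ.filter (fun i : Fin k => (i : ℕ) < j),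
      ∑ τ ∈ Aj n k j σ, g (τ i) = ((Aj n k j σ).card : ℝ) * g (σ i) := by
    intro i hi
    simp only [mem_filter, mem_univ, true_and] at hi
    have step : ∀ τ ∈ Aj n k j σ, g (τ i) = g (σ i) := by
      intro τ hτ
      simp only [Aj, mem_filter, mem_univ, true_and] at hτ
      rw [hτ i hi]
    rw [Finset.sum_congr rfl step, Finset.sum_const, nsmul_eq_mul]
  have hge : ∀ i ∈ univ.filter (fun i : Fin k => ¬ (i : ℕ) < j),
      ∑ τ ∈ Aj n k j σ, g (τ i)
        = ((Aj n k j σ).card : ℝ) * (∑ a ∈ Sj n k j σ, g a) / ((n : ℝ) - j) := by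
    intro i hi
    simp only [mem_filter, mem_univ, true_and, not_lt] at hi
    exact sum_ge hjk hjn σ g i hi
  rw [Finset.sum_congr rfl hlt, Finset.sum_congr rfl hge, Finset.sum_const]
  have hcard : (univ.filter (fun i : Fin k => ¬ (i : ℕ) < j)).card = k - j := by
    have h2 := Finset.card_filter_add_card_filter_not
      (s := (univ : Finset (Fin k))) (p := fun i : Fin k => (i : ℕ) < j)
    have h3 := card_filter_lt (k := k) (j := j) hjk
    simp only [Finset.card_univ, Fintype.card_fin] at h2
    omega
  rw [hcard, ← Finset.mul_sum]
  have hkj : ((k - j : ℕ) : ℝ) = (k : ℝ) - j := by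
    push_cast [Nat.cast_sub hjk]
    ring
  rw [nsmul_eq_mul, hkj]
  field_simp

lemma condExp_single {j : ℕ} (hjk : j ≤ k) (hjn : j < n) (σ : Fin k ↪ Fin n)
    (g : Fin n → ℝ) (i : Fin k) (hi : j ≤ (i : ℕ)) :
    condExpSWOR n k j (fun τ => g (τ i)) σ
      = (∑ a ∈ Sj n k j σ, g a) / ((n : ℝ) - j) := by
  have hd0 : ((n : ℝ) - j) ≠ 0 := by
    have : (j : ℝ) < n := by exact_mod_cast hjn
    linarith
  have hc0 : ((Aj n k j σ).card : ℝ) ≠ 0 := by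
    exact_mod_cast (card_Aj_pos j σ).ne'
  rw [condExpSWOR_eq, sum_ge hjk hjn σ g i hi]
  field_simp

lemma sum_Sj_pred {j : ℕ} (hj : 1 ≤ j) (hjk : j ≤ k) (σ : Fin k ↪ Fin n) (g : Fin n → ℝ) :
    ∑ a ∈ Sj n k (j - 1) σ, g a
      = g (σ ⟨j - 1, by omega⟩) + ∑ a ∈ Sj n k j σ, g a := by
  have hmem : σ ⟨j - 1, by omega⟩ ∉ Sj n k j σ := by
    simp only [Sj, mem_filter, mem_univ, true_and, not_forall]
    exact ⟨⟨j - 1, by omega⟩, by simp; omega⟩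
  have hins : Sj n k (j - 1) σ = insert (σ ⟨j - 1, by omega⟩) (Sj n k j σ) := by
    ext a
    simp only [Sj, mem_insert, mem_filter, mem_univ, true_and]
    constructor
    · intro h
      by_cases hca : a = σ ⟨j - 1, by omega⟩
      · exact Or.inl hca
      · refine Or.inr (fun l hl => ?_)
        rcases Nat.lt_or_ge (l : ℕ) (j - 1) with h' | h'
        · exact h l h'
        · have hl' : l = (⟨j - 1, by omega⟩ : Fin k) := by
            apply Fin.ext; simp only [Fin.val_mk]; omega
          rw [hl']
          exact fun hc => hca hc.symm
    · rintro (rfl | h)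
      · intro l hl hc
        have := σ.injective hc
        have : (l : ℕ) = j - 1 := by rw [this]
        omega
      · intro l hl
        exact h l (by omega)
  rw [hins, Finset.sum_insert hmem]

lemma sum_P_pred {j : ℕ} (hj : 1 ≤ j) (hjk : j ≤ k) (σ : Fin k ↪ Fin n) (g : Fin n → ℝ) :
    ∑ i ∈ univ.filter (fun i : Fin k => (i : ℕ) < j), g (σ i)
      = g (σ ⟨j - 1, by omega⟩)
        + ∑ i ∈ univ.filter (fun i : Fin k => (i : ℕ) < j - 1), g (σ i) := by
  have hins : univ.filter (fun i : Fin k => (i : ℕ) < j)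
      = insert (⟨j - 1, by omega⟩ : Fin k) (univ.filter (fun i : Fin k => (i : ℕ) < j - 1)) := by
    ext l
    simp only [mem_insert, mem_filter, mem_univ, true_and, Fin.ext_iff]
    omega
  rw [hins, Finset.sum_insert (by simp)]

lemma main_aux {j : ℕ} (hj : 1 ≤ j) (hjk : j ≤ k) (hk : k ≤ n) (hjn : j < n)
    (σ : Fin k ↪ Fin n) (g : Fin n → ℝ) :
    condExpSWOR n k j (fun τ => ∑ i : Fin k, g (τ i)) σ -
      condExpSWOR n k (j - 1) (fun τ => ∑ i : Fin k, g (τ i)) σ =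
    (((n : ℝ) - k) / ((n : ℝ) - j)) *
      (g (σ ⟨j - 1, Nat.sub_one_lt_of_le hj hjk⟩) -
        condExpSWOR n k (j - 1) (fun τ => g (τ ⟨j - 1, Nat.sub_one_lt_of_le hj hjk⟩)) σ) := by
  have hjk' : j - 1 ≤ k := by omega
  have hjn' : j - 1 < n := by omega
  rw [condExp_sum hjk hjn σ g, condExp_sum hjk' hjn' σ g,
    condExp_single hjk' hjn' σ g ⟨j - 1, by omega⟩ (by simp),
    sum_Sj_pred hj hjk σ g, sum_P_pred hj hjk σ g]
  have hc1 : ((j - 1 : ℕ) : ℝ) = (j : ℝ) - 1 := by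
    push_cast [Nat.cast_sub hj]
    ring
  rw [hc1]
  have hd1 : ((n : ℝ) - j) ≠ 0 := by
    have : (j : ℝ) < n := by exact_mod_cast hjn
    linarith
  have hd2 : ((n : ℝ) - ((j : ℝ) - 1)) ≠ 0 := by
    have : (j : ℝ) < n := by exact_mod_cast hjn
    linarith
  field_simp
  ring

end SWOR

theorem stmt12 (n k j : ℕ) (hj : 1 ≤ j) (hjk : j ≤ k) (hk : k ≤ n) (hjn : j < n)
    (f : ℝ → ℝ) (σ : Fin k ↪ Fin n) :
    condExpSWOR n k j
        (fun τ => ∑ i : Fin k, f ((((τ i : Fin n) : ℕ) + 1 : ℝ) / n)) σ -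
    condExpSWOR n k (j - 1)
        (fun τ => ∑ i : Fin k, f ((((τ i : Fin n) : ℕ) + 1 : ℝ) / n)) σ =
    (((n : ℝ) - k) / ((n : ℝ) - j)) *
      (f ((((σ ⟨j - 1, by omega⟩ : Fin n) : ℕ) + 1 : ℝ) / n) -
        condExpSWOR n k (j - 1)
          (fun τ => f ((((τ ⟨j - 1, by omega⟩ : Fin n) : ℕ) + 1 : ℝ) / n)) σ) := by
  exact SWOR.main_aux hj hjk hk hjn σ (fun a : Fin n => f ((((a : Fin n) : ℕ) + 1 : ℝ) / n))
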